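/- For all integers k ≥ 0 and 0 ≤ i ≤ k, and every real x with 0 < |x| < 1/(2·cos(π/(k+2))), the series Σ_{j≥0} D_k(i,j)·x^j converges absolutely and satisfies x · U_{k+1}(1/(2x)) · Σ_{j≥0} D_k(i,j)·x^j = U_{k-i}(1/(2x)); equivalently, the generating function D_k(x;i) = Σ_{j≥0} D_k(i,j) x^j equals U_{k-i}(1/(2x)) / (x · U_{k+1}(1/(2x))). -/
import Mathlib


open Real Polynomial Polynomial.Chebyshev

/-- Number of directed paths from `(0,0)` to `(j,i)` in the Bratteli diagram for `SU(2)_k`. -/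
def bratteliD (k : ℕ) : ℕ → ℕ → ℕ
  | i, 0 => if i = 0 then 1 else 0
  | i, j + 1 =>
      if i ≤ k then
        (if 1 ≤ i then bratteliD k (i - 1) j else 0) +
        (if i + 1 ≤ k then bratteliD k (i + 1) j else 0)
      else 0

private lemma bratteliD_zero (k n : ℕ) : bratteliD k n 0 = if n = 0 then 1 else 0 := rfl

private lemma bratteliD_succ (k n j : ℕ) :
    bratteliD k n (j + 1) =
      if n ≤ k then
        (if 1 ≤ n then bratteliD k (n - 1) j else 0) +
        (if n + 1 ≤ k then bratteliD k (n + 1) j else 0)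
      else 0 := rfl

private noncomputable def SAux (k : ℕ) (x : ℝ) (n : ℕ) : ℝ :=
  ∑' j : ℕ, (bratteliD k n j : ℝ) * x ^ j

set_option maxHeartbeats 1600000 in
theorem bratteliD_generating_function (k i : ℕ) (hik : i ≤ k) (x : ℝ)
    (hx0 : 0 < |x|) (hx1 : |x| < 1 / (2 * Real.cos (π / (k + 2)))) :
    Summable (fun j : ℕ => |(bratteliD k i j : ℝ) * x ^ j|) ∧
    x * (Chebyshev.U ℝ ((k : ℤ) + 1)).eval (1 / (2 * x)) *
        (∑' j : ℕ, (bratteliD k i j : ℝ) * x ^ j) =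
      (Chebyshev.U ℝ ((k : ℤ) - i)).eval (1 / (2 * x)) := by
  rcases Nat.eq_zero_or_pos k with hk0 | hk
  · subst hk0
    exfalso
    have h2 : ((0:ℕ):ℝ) + 2 = 2 := by norm_num
    rw [h2, Real.cos_pi_div_two] at hx1
    norm_num at hx1
    linarith
  have hxne : x ≠ 0 := abs_pos.mp hx0
  set θ : ℝ := π / (k + 2) with hθ
  have hk2 : (0:ℝ) < (k:ℝ) + 2 := by positivity
  have hθpos : 0 < θ := div_pos Real.pi_pos hk2
  have hθlt : θ < π / 2 := by
    rw [hθ, div_lt_div_iff₀ hk2 two_pos]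
    have hπ := Real.pi_pos
    have h1 : (1:ℝ) ≤ (k:ℝ) := by exact_mod_cast hk
    nlinarith
  have hcos : 0 < Real.cos θ := Real.cos_pos_of_mem_Ioo ⟨by linarith, hθlt⟩
  set lam : ℝ := 2 * Real.cos θ with hlam
  have hlam0 : 0 < lam := by positivity
  have hq : lam * |x| < 1 := by
    have h := (lt_div_iff₀ hlam0).mp hx1
    calc lam * |x| = |x| * lam := mul_comm _ _
      _ < 1 := h
  have hqnn : 0 ≤ lam * |x| := by positivity
  -- eigenvector identity
  have hsin : ∀ n : ℕ, Real.sin ((n:ℝ) * θ) + Real.sin (((n:ℝ) + 2) * θ)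
      = lam * Real.sin (((n:ℝ) + 1) * θ) := by
    intro n
    rw [show (n:ℝ) * θ = ((n:ℝ) + 1) * θ - θ by ring,
      show ((n:ℝ) + 2) * θ = ((n:ℝ) + 1) * θ + θ by ring,
      Real.sin_sub, Real.sin_add, hlam]
    ring
  have hvpos : ∀ n : ℕ, n ≤ k → 0 < Real.sin (((n:ℝ) + 1) * θ) := by
    intro n hn
    apply Real.sin_pos_of_pos_of_lt_pi
    · positivity
    · have h1 : ((n:ℝ) + 1) < (k:ℝ) + 2 := by
        have : (n:ℝ) ≤ (k:ℝ) := by exact_mod_cast hn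
        linarith
      calc ((n:ℝ) + 1) * θ < ((k:ℝ) + 2) * θ := mul_lt_mul_of_pos_right h1 hθpos
        _ = π := by rw [hθ]; field_simp
  have hvtop : Real.sin (((k:ℝ) + 2) * θ) = 0 := by
    rw [hθ, show ((k:ℝ) + 2) * (π / ((k:ℝ) + 2)) = π from by field_simp]
    exact Real.sin_pi
  have hs0 : 0 < Real.sin θ := by
    have := hvpos 0 (by omega)
    simpa using this
  -- the key bound
  have hbound : ∀ j : ℕ, ∀ n : ℕ, n ≤ k →
      (bratteliD k n j : ℝ) * Real.sin θ ≤ Real.sin (((n:ℝ) + 1) * θ) * lam ^ j := by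
    intro j
    induction j with
    | zero =>
      intro n hn
      rcases Nat.eq_zero_or_pos n with h | h
      · subst h; simp [bratteliD_zero]
      · rw [bratteliD_zero, if_neg (by omega)]
        simpa using (hvpos n hn).le
    | succ j ih =>
      intro n hn
      rw [bratteliD_succ, if_pos hn]
      match n, hn with
      | 0, hn =>
        rw [if_neg (by omega), if_pos (by omega)]
        have h1 := ih 1 hk
        have h3 := hsin 0
        push_cast at h1 h3 ⊢
        simp only [zero_mul, Real.sin_zero, zero_add] at h3
        norm_num at h1 h3 ⊢
        rw [pow_succ]
        nlinarith [h1, h3, pow_nonneg hlam0.le j]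
      | m + 1, hn =>
        rw [if_pos (by omega)]
        have h1 := ih m (by omega)
        have h3 := hsin (m + 1)
        push_cast at h1 h3 ⊢
        have hpow : (0:ℝ) ≤ lam ^ j := by positivity
        by_cases h2 : m + 1 + 1 ≤ k
        · rw [if_pos h2]
          have hb2 := ih (m + 2) (by omega)
          push_cast at hb2
          rw [show ((m:ℝ) + 2 + 1) = ((m:ℝ) + 1 + 2) by ring] at hb2
          calc ((bratteliD k m j : ℝ) + (bratteliD k (m + 2) j : ℝ)) * Real.sin θ
              ≤ (Real.sin (((m:ℝ) + 1) * θ) + Real.sin ((((m:ℝ) + 1) + 2) * θ)) * lam ^ j := by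
                linarith [h1, hb2]
            _ = lam * Real.sin ((((m:ℝ) + 1) + 1) * θ) * lam ^ j := by rw [h3]
            _ = Real.sin (((m:ℝ) + 1 + 1) * θ) * lam ^ (j + 1) := by rw [pow_succ]; ring
        · rw [if_neg h2]
          have hmk : m + 1 = k := by omega
          have hz : Real.sin ((((m:ℝ) + 1) + 2) * θ) = 0 := by
            rw [show ((m:ℝ) + 1) + 2 = (k:ℝ) + 2 by rw [← hmk]; push_cast; ring]
            exact hvtop
          rw [hz, add_zero] at h3
          calc ((bratteliD k m j : ℝ) + 0) * Real.sin θ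
              = (bratteliD k m j : ℝ) * Real.sin θ := by ring
            _ ≤ Real.sin (((m:ℝ) + 1) * θ) * lam ^ j := h1
            _ = lam * Real.sin ((((m:ℝ) + 1) + 1) * θ) * lam ^ j := by rw [h3]
            _ = Real.sin (((m:ℝ) + 1 + 1) * θ) * lam ^ (j + 1) := by rw [pow_succ]; ring
  -- summability
  have hsummable : ∀ n : ℕ, n ≤ k → Summable (fun j : ℕ => |(bratteliD k n j : ℝ) * x ^ j|) := by
    intro n hn
    apply Summable.of_nonneg_of_le (fun j => abs_nonneg _)
      (f := fun j => (Real.sin (((n:ℝ) + 1) * θ) / Real.sin θ) * (lam * |x|) ^ j)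
    · intro j
      rw [abs_mul, abs_pow, Nat.abs_cast]
      rw [div_mul_eq_mul_div, le_div_iff₀ hs0]
      have hb := hbound j n hn
      calc (bratteliD k n j : ℝ) * |x| ^ j * Real.sin θ
          = ((bratteliD k n j : ℝ) * Real.sin θ) * |x| ^ j := by ring
        _ ≤ (Real.sin (((n:ℝ) + 1) * θ) * lam ^ j) * |x| ^ j :=
            mul_le_mul_of_nonneg_right hb (by positivity)
        _ = Real.sin (((n:ℝ) + 1) * θ) * (lam * |x|) ^ j := by rw [mul_pow]; ring
    · exact (summable_geometric_of_lt_one hqnn hq).mul_left _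
  have hsumf : ∀ n : ℕ, n ≤ k → Summable (fun j : ℕ => (bratteliD k n j : ℝ) * x ^ j) :=
    fun n hn => (hsummable n hn).of_abs
  -- tail sums
  have htail : ∀ m : ℕ, m ≤ k →
      ∑' j : ℕ, (bratteliD k m j : ℝ) * x ^ (j + 1) = x * SAux k x m := by
    intro m hm
    calc ∑' j : ℕ, (bratteliD k m j : ℝ) * x ^ (j + 1)
        = ∑' j : ℕ, x * ((bratteliD k m j : ℝ) * x ^ j) := tsum_congr (fun j => by ring)
      _ = x * SAux k x m := tsum_mul_left
  have htails : ∀ m : ℕ, m ≤ k →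
      Summable (fun j : ℕ => (bratteliD k m j : ℝ) * x ^ (j + 1)) := by
    intro m hm
    exact ((hsumf m hm).mul_left x).congr (fun j => by ring)
  -- the recurrence for the generating functions
  have hrec : ∀ n : ℕ, n ≤ k → SAux k x n =
      (if n = 0 then 1 else 0) +
        x * ((if 1 ≤ n then SAux k x (n - 1) else 0) +
             (if n + 1 ≤ k then SAux k x (n + 1) else 0)) := by
    intro n hn
    have h0 : SAux k x n = (bratteliD k n 0 : ℝ) * x ^ 0 +
        ∑' j : ℕ, (bratteliD k n (j + 1) : ℝ) * x ^ (j + 1) := Summable.tsum_eq_zero_add (hsumf n hn)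
    rw [h0, bratteliD_zero]
    by_cases h1 : 1 ≤ n
    · rw [if_neg (by omega : ¬ n = 0), if_neg (by omega : ¬ n = 0), if_pos h1]
      by_cases h2 : n + 1 ≤ k
      · rw [if_pos h2]
        simp only [bratteliD_succ, if_pos hn, if_pos h1, if_pos h2, Nat.cast_add]
        have e1 : ∀ j : ℕ,
            ((bratteliD k (n-1) j : ℝ) + (bratteliD k (n+1) j : ℝ)) * x ^ (j+1)
              = (bratteliD k (n-1) j : ℝ) * x ^ (j+1)
                + (bratteliD k (n+1) j : ℝ) * x ^ (j+1) := fun j => by ring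
        rw [tsum_congr e1, Summable.tsum_add (htails (n-1) (by omega)) (htails (n+1) h2),
          htail (n-1) (by omega), htail (n+1) h2]
        push_cast
        ring
      · rw [if_neg h2]
        simp only [bratteliD_succ, if_pos hn, if_pos h1, if_neg h2, add_zero]
        rw [htail (n-1) (by omega)]
        push_cast
        ring
    · have hn0 : n = 0 := by omega
      subst hn0
      rw [if_pos rfl, if_pos rfl, if_neg (by omega : ¬ (1:ℕ) ≤ 0),
        if_pos (show 0 + 1 ≤ k by omega)]
      simp only [bratteliD_succ, if_pos hn, if_neg (by omega : ¬ (1:ℕ) ≤ 0),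
        if_pos (show 0 + 1 ≤ k by omega), zero_add]
      rw [htail 1 hk]
      push_cast
      ring
  -- solving the recurrence with Chebyshev polynomials
  set t : ℝ := 1 / (2 * x) with ht
  have h2t : 2 * t * x = 1 := by rw [ht]; field_simp
  have hSm : ∀ m : ℕ, m ≤ k →
      SAux k x (k - m) = (Chebyshev.U ℝ (m:ℤ)).eval t * SAux k x k := by
    intro m
    induction m using Nat.strong_induction_on with
    | _ m ih =>
      match m with
      | 0 => intro _; simp
      | 1 =>
        intro h1k
        have h := hrec k le_rfl
        rw [if_neg (by omega), if_pos (by omega), if_neg (by omega)] at h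
        simp only [add_zero, zero_add] at h
        -- h : SAux k x k = x * SAux k x (k - 1)
        have hU1 : (Chebyshev.U ℝ ((1:ℕ):ℤ)).eval t = 2 * t := by
          norm_num
        rw [hU1]
        linear_combination (-(2*t)) * h - SAux k x (k-1) * h2t
      | m + 2 =>
        intro hm2
        have hik' : k - (m+1) ≤ k := by omega
        have h := hrec (k - (m+1)) hik'
        rw [if_neg (by omega), if_pos (by omega), if_pos (by omega)] at h
        rw [show k - (m+1) - 1 = k - (m+2) by omega, show k - (m+1) + 1 = k - m by omega] at h
        rw [ih (m+1) (by omega) (by omega), ih m (by omega) (by omega)] at h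
        rw [zero_add] at h
        have hcast : (((m:ℕ)+2:ℕ):ℤ) = ((m:ℕ):ℤ) + 2 := by push_cast; ring
        rw [hcast, Chebyshev.U_add_two]
        have hcast1 : ((m:ℕ):ℤ) + 1 = (((m+1:ℕ)):ℤ) := by push_cast; ring
        rw [hcast1]
        simp only [eval_sub, eval_mul, eval_ofNat, eval_X]
        -- h : U(m+1) * Sk = x * (S(k-(m+2)) + U m * Sk)
        -- goal : S(k-(m+2)) = (2 * t * U(m+1) - U m) * Sk
        linear_combination (-(2*t)) * h
          - (SAux k x (k-(m+2)) + (Chebyshev.U ℝ (m:ℤ)).eval t * SAux k x k) * h2t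
  have hSk : x * (Chebyshev.U ℝ ((k:ℤ) + 1)).eval t * SAux k x k = 1 := by
    have h0 := hrec 0 (by omega)
    rw [if_pos rfl, if_neg (by omega), if_pos (show 0 + 1 ≤ k by omega)] at h0
    have hA := hSm k le_rfl
    rw [Nat.sub_self] at hA
    have hB := hSm (k-1) (by omega)
    rw [show k - (k-1) = 1 by omega] at hB
    rw [hA, hB, zero_add] at h0
    have hU : Chebyshev.U ℝ ((k:ℤ)+1)
        = 2 * X * Chebyshev.U ℝ (k:ℤ) - Chebyshev.U ℝ ((k:ℤ)-1) := by
      have h := Chebyshev.U_add_two ℝ ((k:ℤ)-1)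
      rw [show (k:ℤ)-1+2 = (k:ℤ)+1 by ring, show (k:ℤ)-1+1 = (k:ℤ) by ring] at h
      exact h
    rw [hU, show ((k:ℤ)-1) = (((k-1:ℕ)):ℤ) by omega]
    simp only [eval_sub, eval_mul, eval_ofNat, eval_X]
    -- h0 : U k * Sk = 1 + x * (U (k-1) * Sk)
    linear_combination h0 + ((Chebyshev.U ℝ (k:ℤ)).eval t * SAux k x k) * h2t
  refine ⟨hsummable i hik, ?_⟩
  have hSi := hSm (k - i) (by omega)
  rw [show k - (k - i) = i by omega] at hSi
  rw [show (∑' j : ℕ, (bratteliD k i j : ℝ) * x ^ j) = SAux k x i from rfl, hSi]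
  rw [show ((k:ℤ) - i) = (((k - i : ℕ)):ℤ) by omega]
  calc x * (Chebyshev.U ℝ ((k:ℤ)+1)).eval t * ((Chebyshev.U ℝ (((k-i:ℕ)):ℤ)).eval t * SAux k x k)
      = (Chebyshev.U ℝ (((k-i:ℕ)):ℤ)).eval t
          * (x * (Chebyshev.U ℝ ((k:ℤ)+1)).eval t * SAux k x k) := by ring
    _ = (Chebyshev.U ℝ (((k-i:ℕ)):ℤ)).eval t := by rw [hSk]; ring
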